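/- arXiv:2509.16969 — 5 statements merged into one kernel-verified Lean document; each statement's English description precedes it below -/
import Mathlib

section
/- If T is a normal bounded operator on a Hilbert space that is m-isometric for some m ≥ 1, then T is an isometry, and hence unitary. -/
open ContinuousLinearMap Finset

lemma selfadj_pow_eq_zero {E : Type*} [NormedRing E] [StarRing E] [CStarRing E]
    {x : E} (hx : IsSelfAdjoint x) {m : ℕ} (hm : 1 ≤ m) (h : x ^ m = 0) : x = 0 := by
  have key : x ^ (2 ^ m) = 0 := by
    have hle : m ≤ 2 ^ m := Nat.le_of_lt (Nat.lt_two_pow_self (n := m))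
    calc x ^ (2 ^ m) = x ^ m * x ^ (2 ^ m - m) := by
          rw [← pow_add, Nat.add_sub_cancel' hle]
      _ = 0 := by rw [h, zero_mul]
  have := hx.nnnorm_pow_two_pow m
  rw [key, nnnorm_zero] at this
  have hn : ‖x‖₊ = 0 := by
    have := pow_eq_zero_iff (n := 2 ^ m) (by positivity) |>.mp this.symm
    exact this
  simpa using (nnnorm_eq_zero.mp hn)

/-- A normal bounded operator which is m-isometric for some m ≥ 1 is an isometry,
and hence unitary. -/
theorem stmt_6 {H : Type*} [NormedAddCommGroup H] [InnerProductSpace ℂ H] [CompleteSpace H]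
    (T : H →L[ℂ] H) (hnormal : adjoint T * T = T * adjoint T) (m : ℕ) (hm : 1 ≤ m)
    (hmiso : ∑ k ∈ range (m + 1),
      ((-1 : ℂ) ^ (m - k) * (m.choose k : ℂ)) • ((adjoint T) ^ k * T ^ k) = 0) :
    (∀ x : H, ‖T x‖ = ‖x‖) ∧ adjoint T * T = 1 ∧ T * adjoint T = 1 := by
  set A : H →L[ℂ] H := adjoint T * T with hA
  have hcomm : Commute (adjoint T) T := hnormal
  have hpow : ∀ k, (adjoint T) ^ k * T ^ k = A ^ k := fun k => (hcomm.mul_pow k).symm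
  have hsum : (A - 1) ^ m = 0 := by
    have expand : (A - 1) ^ m =
        ∑ k ∈ range (m + 1), A ^ k * (-1 : H →L[ℂ] H) ^ (m - k) * (m.choose k : ℕ) := by
      have := (Commute.neg_one_right A).add_pow m
      simpa [sub_eq_add_neg] using this
    rw [expand, ← hmiso]
    apply Finset.sum_congr rfl
    intro k hk
    rw [hpow]
    have : ((-1 : H →L[ℂ] H)) ^ (m - k) = ((-1 : ℂ) ^ (m - k)) • (1 : H →L[ℂ] H) := by
      rw [← neg_one_smul ℂ (1 : H →L[ℂ] H)]
      rw [smul_pow]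
      simp
    have h2 : ((m.choose k : ℕ) : H →L[ℂ] H) = ((m.choose k : ℂ)) • 1 := by
      rw [Nat.cast_smul_eq_nsmul]; simp
    rw [this, h2, mul_smul_comm, mul_one, mul_smul_comm, mul_one, smul_smul, mul_comm]
  have hsa : IsSelfAdjoint (A - 1) := by
    rw [IsSelfAdjoint, star_sub, star_one, hA, star_mul, star_eq_adjoint, star_eq_adjoint,
      adjoint_adjoint]
  have hA1 : A = 1 := by
    exact sub_eq_zero.mp (selfadj_pow_eq_zero hsa hm hsum)
  refine ⟨?_, hA1, by rw [← hnormal]; exact hA1⟩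
  intro x
  exact (norm_map_iff_adjoint_comp_self T).mpr hA1 x
end

section
/- Let (X,F,μ) be a σ-finite measure space and u ∈ L^∞(μ). The multiplication operator M_u on L²(μ) is quasi-m-isometric (i.e., Σ_{k=0}^{m} (-1)^{m-k} C(m,k) (M_u*)^{k+1} (M_u)^{k+1} = 0) if and only if |u|²(|u|² - 1) = 0 μ-a.e., i.e., μ({x : u(x) ≠ 0} ∩ {x : |u(x)| ≠ 1}) = 0. -/
open ContinuousLinearMap Finset MeasureTheory

local notation "⟪" x ", " y "⟫" => @inner ℂ _ _ x y

private lemma mul_pow_ae {X : Type*} [MeasurableSpace X] {μ : Measure X}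
    {u : X → ℂ} {M : Lp ℂ 2 μ →L[ℂ] Lp ℂ 2 μ}
    (hM : ∀ f : Lp ℂ 2 μ, ⇑(M f) =ᵐ[μ] fun x => u x * f x)
    (n : ℕ) (f : Lp ℂ 2 μ) :
    ⇑((M ^ n) f) =ᵐ[μ] fun x => u x ^ n * f x := by
  induction n with
  | zero => simp only [pow_zero, one_apply, one_mul]; exact Filter.EventuallyEq.rfl
  | succ n ih =>
    have h2 : (M ^ (n + 1)) f = M ((M ^ n) f) := by rw [pow_succ']; rfl
    rw [h2]
    filter_upwards [hM ((M ^ n) f), ih] with x hx hix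
    rw [hx, hix, pow_succ]
    ring

private lemma poly_id (m : ℕ) (t : ℝ) :
    ∑ k ∈ range (m + 1), (-1 : ℝ) ^ (m - k) * (m.choose k : ℝ) * t ^ (k + 1)
      = t * (t - 1) ^ m := by
  rw [sub_pow, Finset.mul_sum]
  apply Finset.sum_congr rfl
  intro k hk
  rw [Finset.mem_range] at hk
  have h : (-1 : ℝ) ^ (m - k) = (-1) ^ (k + m) := by
    rw [show k + m = (m - k) + 2 * k by omega, pow_add, pow_mul]
    simp
  rw [h, pow_succ]
  ring

private lemma integrable_wk {X : Type*} [MeasurableSpace X] {μ : Measure X}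
    {u : X → ℂ} {M : Lp ℂ 2 μ →L[ℂ] Lp ℂ 2 μ}
    (hM : ∀ f : Lp ℂ 2 μ, ⇑(M f) =ᵐ[μ] fun x => u x * f x)
    (k : ℕ) (f : Lp ℂ 2 μ) :
    Integrable (fun x => (‖u x‖ ^ 2) ^ (k + 1) * ‖f x‖ ^ 2) μ := by
  have h1 : Integrable (fun x => ‖((M ^ (k + 1)) f) x‖ ^ 2) μ :=
    (memLp_two_iff_integrable_sq_norm (Lp.aestronglyMeasurable _)).mp (Lp.memLp _)
  refine h1.congr ?_
  filter_upwards [mul_pow_ae hM (k + 1) f] with x hx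
  rw [hx]
  simp only [norm_mul, norm_pow]
  ring

private lemma inner_T {X : Type*} [MeasurableSpace X] {μ : Measure X}
    {u : X → ℂ} {M : Lp ℂ 2 μ →L[ℂ] Lp ℂ 2 μ}
    (hM : ∀ f : Lp ℂ 2 μ, ⇑(M f) =ᵐ[μ] fun x => u x * f x) (m : ℕ) (f : Lp ℂ 2 μ) :
    ⟪(∑ k ∈ range (m + 1), ((-1 : ℂ) ^ (m - k) * (m.choose k : ℂ)) •
        ((adjoint M) ^ (k + 1) * M ^ (k + 1))) f, f⟫
      = ((∫ x, (‖u x‖ ^ 2 * (‖u x‖ ^ 2 - 1) ^ m)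
            * ‖f x‖ ^ 2 ∂μ : ℝ) : ℂ) := by
  have hBk : ∀ k, ⟪((adjoint M) ^ (k + 1) * M ^ (k + 1)) f, f⟫
      = ((∫ x, (‖u x‖ ^ 2) ^ (k + 1) * ‖f x‖ ^ 2 ∂μ : ℝ) : ℂ) := by
    intro k
    have hadj : (adjoint M) ^ (k + 1) = adjoint (M ^ (k + 1)) := by
      rw [← star_eq_adjoint, ← star_eq_adjoint, ← star_pow]
    rw [ContinuousLinearMap.mul_apply, hadj, adjoint_inner_left, L2.inner_def]
    have hcg : (fun a => ⟪(((M ^ (k + 1)) f) a), (((M ^ (k + 1)) f) a)⟫) =ᵐ[μ]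
        (fun x => (((‖u x‖ ^ 2) ^ (k + 1) * ‖f x‖ ^ 2 : ℝ) : ℂ)) := by
      filter_upwards [mul_pow_ae hM (k + 1) f] with x hx
      rw [RCLike.inner_apply, RCLike.mul_conj, hx]
      simp only [norm_mul, norm_pow]
      push_cast
      ring_nf
      rfl
    rw [integral_congr_ae hcg]
    exact integral_ofReal
  rw [ContinuousLinearMap.sum_apply, sum_inner]
  have : ∀ k ∈ range (m + 1),
      ⟪(((-1 : ℂ) ^ (m - k) * (m.choose k : ℂ)) •
        ((adjoint M) ^ (k + 1) * M ^ (k + 1))) f, f⟫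
      = (((-1 : ℝ) ^ (m - k) * (m.choose k : ℝ)
          * ∫ x, (‖u x‖ ^ 2) ^ (k + 1) * ‖f x‖ ^ 2 ∂μ : ℝ) : ℂ) := by
    intro k _
    rw [ContinuousLinearMap.smul_apply, inner_smul_left, hBk k]
    push_cast
    simp [map_mul, map_pow]
  rw [Finset.sum_congr rfl this, ← Complex.ofReal_sum]
  congr 1
  have hint : ∀ k ∈ range (m + 1), Integrable
      (fun x => (-1 : ℝ) ^ (m - k) * (m.choose k : ℝ)
        * ((‖u x‖ ^ 2) ^ (k + 1) * ‖f x‖ ^ 2)) μ :=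
    fun k _ => (integrable_wk hM k f).const_mul _
  simp_rw [← integral_const_mul]
  rw [← integral_finset_sum _ hint]
  apply integral_congr_ae
  apply Filter.Eventually.of_forall
  intro x
  simp only [← mul_assoc, ← Finset.sum_mul]
  rw [poly_id]

private lemma meas_zero_aux {X : Type*} [MeasurableSpace X] {μ : Measure X}
    {W : X → ℝ} (hW : AEStronglyMeasurable W μ) {s : Set X} (hs : MeasurableSet s)
    (hμs : μ s ≠ ⊤) {C : ℝ} (hC : ∀ x ∈ s, |W x| ≤ C)
    (hpos : ∀ x ∈ s, 0 < W x)
    (h0 : ∫ x in s, W x ∂μ = 0) : μ s = 0 := by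
  have hbdd : ∀ᵐ x ∂μ.restrict s, ‖W x‖ ≤ C := by
    filter_upwards [ae_restrict_mem hs] with x hx
    simpa [Real.norm_eq_abs] using hC x hx
  have hint : IntegrableOn W s μ := Measure.integrableOn_of_bounded hμs hW hbdd
  have hnn : 0 ≤ᵐ[μ.restrict s] W := by
    filter_upwards [ae_restrict_mem hs] with x hx
    exact (hpos x hx).le
  have hae : W =ᵐ[μ.restrict s] 0 :=
    (setIntegral_eq_zero_iff_of_nonneg_ae hnn hint).mp h0
  have hfalse : ∀ᵐ x ∂μ.restrict s, False := by
    filter_upwards [hae, ae_restrict_mem hs] with x hx hxs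
    exact (hpos x hxs).ne' hx
  rw [ae_iff] at hfalse
  simpa using hfalse

private lemma forward_ae {X : Type*} [MeasurableSpace X] (μ : Measure X) [SigmaFinite μ]
    (v : X → ℂ) (hv : Measurable v) (m : ℕ)
    (H : ∀ f : Lp ℂ 2 μ, ∫ x, (‖v x‖ ^ 2 * (‖v x‖ ^ 2 - 1) ^ m)
          * ‖f x‖ ^ 2 ∂μ = 0) :
    ∀ᵐ x ∂μ, ‖v x‖ ^ 2 * (‖v x‖ ^ 2 - 1) ^ m = 0 := by
  set W : X → ℝ := fun x => ‖v x‖ ^ 2 * (‖v x‖ ^ 2 - 1) ^ m with hWdef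
  have habs : Measurable fun x => ‖v x‖ := by
    simpa using hv.norm
  have hWmeas : Measurable W :=
    ((habs.pow_const 2).mul (((habs.pow_const 2).sub measurable_const).pow_const m))
  -- the integral of W over any finite-measure set vanishes
  have hsint : ∀ (s : Set X), MeasurableSet s → μ s ≠ ⊤ → ∫ x in s, W x ∂μ = 0 := by
    intro s hs hμs
    rw [← integral_indicator hs]
    calc ∫ x, s.indicator W x ∂μ
        = ∫ x, W x * ‖(indicatorConstLp 2 hs hμs (1 : ℂ)) x‖ ^ 2 ∂μ := by
          apply integral_congr_ae
          filter_upwards [indicatorConstLp_coeFn (p := 2) (hs := hs) (hμs := hμs) (c := (1 : ℂ))]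
            with x hx
          rw [hx]
          by_cases hxs : x ∈ s
          · simp [Set.indicator_of_mem hxs]
          · simp [Set.indicator_of_notMem hxs]
      _ = 0 := H _
  -- positive and negative parts
  set sp : ℕ → Set X := fun n =>
    spanningSets μ n ∩ {x | ‖v x‖ ≤ n} ∩ {x | 0 < W x} with hspdef
  set sn : ℕ → Set X := fun n =>
    spanningSets μ n ∩ {x | ‖v x‖ ≤ n} ∩ {x | W x < 0} with hsndef
  have hbound : ∀ (n : ℕ) (x : X), ‖v x‖ ≤ n →
      |W x| ≤ (n : ℝ) ^ 2 * ((n : ℝ) ^ 2 + 1) ^ m := by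
    intro n x hx
    set t := ‖v x‖ ^ 2 with ht
    have ht0 : 0 ≤ t := sq_nonneg _
    have htn : t ≤ (n : ℝ) ^ 2 := by
      have := norm_nonneg (v x)
      nlinarith
    have h2 : |t - 1| ≤ (n : ℝ) ^ 2 + 1 := abs_le.mpr ⟨by nlinarith, by nlinarith⟩
    have h1 : |t| ≤ (n : ℝ) ^ 2 := by rwa [abs_of_nonneg ht0]
    calc |W x| = |t * (t - 1) ^ m| := rfl
      _ = |t| * |t - 1| ^ m := by simp [abs_mul, abs_pow]
      _ ≤ (n : ℝ) ^ 2 * ((n : ℝ) ^ 2 + 1) ^ m :=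
        mul_le_mul h1 (pow_le_pow_left₀ (abs_nonneg _) h2 m)
          (pow_nonneg (abs_nonneg _) m) (by positivity)
  have hsp_meas : ∀ n, MeasurableSet (sp n) :=
    fun n => ((measurableSet_spanningSets μ n).inter
      (measurableSet_le habs measurable_const)).inter
      (measurableSet_lt measurable_const hWmeas)
  have hsn_meas : ∀ n, MeasurableSet (sn n) :=
    fun n => ((measurableSet_spanningSets μ n).inter
      (measurableSet_le habs measurable_const)).inter
      (measurableSet_lt hWmeas measurable_const)
  have hsp_fin : ∀ n, μ (sp n) ≠ ⊤ := fun n =>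
    ((measure_mono (Set.inter_subset_left.trans Set.inter_subset_left)).trans_lt
      (measure_spanningSets_lt_top μ n)).ne
  have hsn_fin : ∀ n, μ (sn n) ≠ ⊤ := fun n =>
    ((measure_mono (Set.inter_subset_left.trans Set.inter_subset_left)).trans_lt
      (measure_spanningSets_lt_top μ n)).ne
  have hsp_null : ∀ n, μ (sp n) = 0 := by
    intro n
    refine meas_zero_aux hWmeas.aestronglyMeasurable (hsp_meas n) (hsp_fin n)
      (C := (n : ℝ) ^ 2 * ((n : ℝ) ^ 2 + 1) ^ m) ?_ ?_ (hsint _ (hsp_meas n) (hsp_fin n))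
    · exact fun x hx => hbound n x hx.1.2
    · exact fun x hx => hx.2
  have hsn_null : ∀ n, μ (sn n) = 0 := by
    intro n
    refine meas_zero_aux (W := fun x => -W x) hWmeas.neg.aestronglyMeasurable (hsn_meas n)
      (hsn_fin n) (C := (n : ℝ) ^ 2 * ((n : ℝ) ^ 2 + 1) ^ m) ?_ ?_ ?_
    · intro x hx; rw [abs_neg]; exact hbound n x hx.1.2
    · exact fun x hx => neg_pos.mpr hx.2
    · rw [integral_neg, hsint _ (hsn_meas n) (hsn_fin n), neg_zero]
  have hcover : {x | W x ≠ 0} ⊆ ⋃ n, (sp n ∪ sn n) := by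
    intro x hx
    obtain ⟨n1, hn1⟩ : ∃ n, x ∈ spanningSets μ n := by
      have : x ∈ ⋃ i, spanningSets μ i := by rw [iUnion_spanningSets]; trivial
      exact Set.mem_iUnion.mp this
    set N := max n1 ⌈‖v x‖⌉₊ with hN
    have hmemN : x ∈ spanningSets μ N := monotone_spanningSets μ (le_max_left _ _) hn1
    have hleN : ‖v x‖ ≤ N :=
      (Nat.le_ceil _).trans (Nat.cast_le.mpr (le_max_right _ _))
    rcases (hx : W x ≠ 0).lt_or_gt with h | h
    · exact Set.mem_iUnion.mpr ⟨N, Or.inr ⟨⟨hmemN, hleN⟩, h⟩⟩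
    · exact Set.mem_iUnion.mpr ⟨N, Or.inl ⟨⟨hmemN, hleN⟩, h⟩⟩
  have hnull : μ {x | W x ≠ 0} = 0 := by
    refine measure_mono_null hcover (measure_iUnion_null fun n => ?_)
    exact measure_union_null (hsp_null n) (hsn_null n)
  rw [ae_iff]
  exact hnull

/-- The multiplication operator M_u on L²(μ) is quasi-m-isometric iff
|u|²(|u|² - 1) = 0 μ-a.e., i.e. μ({u ≠ 0} ∩ {|u| ≠ 1}) = 0. -/
theorem stmt_8 {X : Type*} [MeasurableSpace X] (μ : Measure X) [SigmaFinite μ]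
    (u : X → ℂ) (M : Lp ℂ 2 μ →L[ℂ] Lp ℂ 2 μ)
    (hM : ∀ f : Lp ℂ 2 μ, ⇑(M f) =ᵐ[μ] fun x => u x * f x)
    (m : ℕ) (hm : 1 ≤ m) :
    ((∑ k ∈ range (m + 1),
        ((-1 : ℂ) ^ (m - k) * (m.choose k : ℂ)) •
          ((adjoint M) ^ (k + 1) * M ^ (k + 1)) = 0)
      ↔ (∀ᵐ x ∂μ, ‖u x‖ ^ 2 * (‖u x‖ ^ 2 - 1) = 0)) ∧
    ((∀ᵐ x ∂μ, ‖u x‖ ^ 2 * (‖u x‖ ^ 2 - 1) = 0)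
      ↔ μ ({x | u x ≠ 0} ∩ {x | ‖u x‖ ≠ 1}) = 0) := by
  have key : ∀ z : ℂ, (‖z‖ ^ 2 * (‖z‖ ^ 2 - 1) = 0)
      ↔ (z = 0 ∨ ‖z‖ = 1) := by
    intro z
    rw [mul_eq_zero, pow_eq_zero_iff (two_ne_zero), sub_eq_zero, norm_eq_zero]
    constructor
    · rintro (h | h)
      · exact Or.inl h
      · right
        have h4 : (‖z‖ - 1) * (‖z‖ + 1) = 0 := by nlinarith [h]
        rcases mul_eq_zero.mp h4 with h5 | h5
        · linarith
        · exfalso; nlinarith [norm_nonneg z]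
    · rintro (h | h)
      · exact Or.inl h
      · right; rw [h]; norm_num
  have part2 : (∀ᵐ x ∂μ, ‖u x‖ ^ 2 * (‖u x‖ ^ 2 - 1) = 0)
      ↔ μ ({x | u x ≠ 0} ∩ {x | ‖u x‖ ≠ 1}) = 0 := by
    rw [show {x | u x ≠ 0} ∩ {x | ‖u x‖ ≠ 1}
        = {x | ¬ (u x = 0 ∨ ‖u x‖ = 1)} by ext x; simp [not_or]]
    rw [← ae_iff]
    exact Filter.eventually_congr (Filter.Eventually.of_forall fun x => key (u x))
  refine ⟨?_, part2⟩
  -- Step 1: reduce to vanishing of all the quadratic forms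
  have hTiff : (∑ k ∈ range (m + 1),
        ((-1 : ℂ) ^ (m - k) * (m.choose k : ℂ)) •
          ((adjoint M) ^ (k + 1) * M ^ (k + 1)) = 0)
      ↔ ∀ f : Lp ℂ 2 μ, ∫ x, (‖u x‖ ^ 2 * (‖u x‖ ^ 2 - 1) ^ m)
          * ‖f x‖ ^ 2 ∂μ = 0 := by
    constructor
    · intro h f
      have h0 := inner_T hM m f
      rw [h] at h0
      simp only [ContinuousLinearMap.zero_apply, inner_zero_left] at h0
      exact_mod_cast h0.symm
    · intro h
      set T := ∑ k ∈ range (m + 1),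
        ((-1 : ℂ) ^ (m - k) * (m.choose k : ℂ)) •
          ((adjoint M) ^ (k + 1) * M ^ (k + 1)) with hT
      have h1 : ∀ g : Lp ℂ 2 μ, ⟪T g, g⟫ = 0 := fun g => by
        rw [hT, inner_T hM m g, h g, Complex.ofReal_zero]
      have h2 := (inner_map_self_eq_zero (T : Lp ℂ 2 μ →ₗ[ℂ] Lp ℂ 2 μ)).mp (fun x => h1 x)
      exact ContinuousLinearMap.ext fun f => LinearMap.congr_fun h2 f
  rw [hTiff]
  -- Step 2: find a measurable representative of u
  obtain ⟨g, hg_pos, hg_meas, hg_int⟩ :=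
    exists_pos_lintegral_lt_of_sigmaFinite μ (one_ne_zero (α := ENNReal))
  set f₀ : X → ℂ := fun x => ((Real.sqrt (g x) : ℝ) : ℂ) with hf₀def
  have hf₀_meas : Measurable f₀ :=
    Complex.measurable_ofReal.comp (Real.continuous_sqrt.measurable.comp hg_meas.coe_nnreal_real)
  have hf₀_ne : ∀ x, f₀ x ≠ 0 := by
    intro x
    simp only [hf₀def, ne_eq, Complex.ofReal_eq_zero]
    exact (Real.sqrt_pos.mpr (by exact_mod_cast hg_pos x)).ne'
  have hmem : MemLp f₀ 2 μ := by
    rw [memLp_two_iff_integrable_sq_norm hf₀_meas.aestronglyMeasurable]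
    have heq : (fun x => ‖f₀ x‖ ^ 2) = fun x => ((g x : ℝ)) := by
      funext x
      simp only [hf₀def, Complex.norm_real, Real.norm_eq_abs,
        abs_of_nonneg (Real.sqrt_nonneg _)]
      exact Real.sq_sqrt (NNReal.coe_nonneg _)
    rw [heq]
    refine ⟨hg_meas.coe_nnreal_real.aestronglyMeasurable, ?_⟩
    have : ∫⁻ x, ‖(g x : ℝ)‖ₑ ∂μ = ∫⁻ x, g x ∂μ := by
      apply lintegral_congr
      intro x
      rw [Real.enorm_of_nonneg (NNReal.coe_nonneg _)]
      simp
    rw [HasFiniteIntegral, this]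
    exact hg_int.trans_le le_top
  set F₀ := hmem.toLp f₀ with hF₀def
  have hF₀ : ⇑F₀ =ᵐ[μ] f₀ := hmem.coeFn_toLp
  have hmk : Measurable ((Lp.aestronglyMeasurable (M F₀)).mk _) :=
    (Lp.aestronglyMeasurable (M F₀)).stronglyMeasurable_mk.measurable
  have hquot : AEStronglyMeasurable
      (fun x => ((Lp.aestronglyMeasurable (M F₀)).mk _ x) / f₀ x) μ :=
    (hmk.div hf₀_meas).aestronglyMeasurable
  have hu_ae : AEStronglyMeasurable u μ := by
    refine hquot.congr ?_
    filter_upwards [hM F₀, hF₀, (Lp.aestronglyMeasurable (M F₀)).ae_eq_mk] with x h1 h2 h3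
    rw [← h3, h1, h2]
    exact mul_div_cancel_right₀ (u x) (hf₀_ne x)
  set v := hu_ae.mk u with hvdef
  have hv : Measurable v := hu_ae.stronglyMeasurable_mk.measurable
  have huv : u =ᵐ[μ] v := hu_ae.ae_eq_mk
  -- Step 3: the equivalence
  constructor
  · intro h
    have H : ∀ f : Lp ℂ 2 μ, ∫ x, (‖v x‖ ^ 2 * (‖v x‖ ^ 2 - 1) ^ m)
        * ‖f x‖ ^ 2 ∂μ = 0 := by
      intro f
      rw [← h f]
      apply integral_congr_ae
      filter_upwards [huv] with x hx
      rw [hx]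
    have h2 := forward_ae μ v hv m H
    filter_upwards [h2, huv] with x hx hxy
    rw [hxy]
    rcases mul_eq_zero.mp hx with h3 | h3
    · rw [h3, zero_mul]
    · rw [pow_eq_zero_iff (by omega : m ≠ 0)] at h3
      rw [h3, mul_zero]
  · intro h f
    apply integral_eq_zero_of_ae
    filter_upwards [h] with x hx
    rcases mul_eq_zero.mp hx with h3 | h3
    · simp [h3]
    · have : (‖u x‖ ^ 2 - 1) ^ m = 0 := by
        rw [h3, zero_pow (by omega : m ≠ 0)]
      simp [this]
end

section
/- Let W = M_u C_φ be a bounded weighted composition operator on L²(μ) with W*^n W^n = M_{J_n} for a sequence of nonnegative functions J_n (J_0 = 1). Then W is quasi-m-isometric if and only if G_m := Σ_{k=0}^{m} (-1)^{m-k} C(m,k) J_{k+1} = 0 μ-a.e., and W is m-isometric if and only if G_m^0 := Σ_{k=0}^{m} (-1)^{m-k} C(m,k) J_k = 0 μ-a.e. -/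
open ContinuousLinearMap Finset MeasureTheory

private lemma coeFn_finset_sum {X : Type*} [MeasurableSpace X] {μ : Measure X}
    {ι : Type*} (s : Finset ι) (f : ι → Lp ℂ 2 μ) :
    ⇑(∑ i ∈ s, f i) =ᵐ[μ] fun x => ∑ i ∈ s, f i x := by
  classical
  induction s using Finset.induction_on with
  | empty => simp only [Finset.sum_empty]; exact Lp.coeFn_zero ℂ 2 μ
  | insert a s hnot ih =>
    rw [Finset.sum_insert hnot]
    filter_upwards [Lp.coeFn_add (f a) (∑ i ∈ s, f i), ih] with x h1 h2
    simp only [h1, Pi.add_apply, h2, Finset.sum_insert hnot]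

private lemma op_zero_iff {X : Type*} [MeasurableSpace X] {μ : Measure X} [SigmaFinite μ]
    (T : Lp ℂ 2 μ →L[ℂ] Lp ℂ 2 μ) (g : X → ℂ)
    (h : ∀ f : Lp ℂ 2 μ, ⇑(T f) =ᵐ[μ] fun x => g x * f x) :
    T = 0 ↔ ∀ᵐ x ∂μ, g x = 0 := by
  constructor
  · intro hT
    have hs : ∀ n : ℕ, ∀ᵐ x ∂μ, x ∈ spanningSets μ n → g x = 0 := by
      intro n
      have hms : MeasurableSet (spanningSets μ n) := measurableSet_spanningSets μ n
      have hμs : μ (spanningSets μ n) ≠ ⊤ := (measure_spanningSets_lt_top μ n).ne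
      set f : Lp ℂ 2 μ := indicatorConstLp 2 hms hμs (1 : ℂ) with hf
      have h1 := h f
      have h2 : ⇑(T f) =ᵐ[μ] 0 := by
        rw [hT]; simpa using Lp.coeFn_zero ℂ 2 μ
      have h3 : ⇑f =ᵐ[μ] (spanningSets μ n).indicator fun _ => (1 : ℂ) :=
        indicatorConstLp_coeFn
      filter_upwards [h1, h2, h3] with x ha hb hc hx
      have : g x * f x = 0 := by rw [← ha, hb]; rfl
      rwa [hc, Set.indicator_of_mem hx, mul_one] at this
    filter_upwards [ae_all_iff.2 hs] with x hx
    exact hx (spanningSetsIndex μ x) (mem_spanningSetsIndex μ x)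
  · intro hg
    ext f
    have h0 : ⇑((0 : Lp ℂ 2 μ →L[ℂ] Lp ℂ 2 μ) f) =ᵐ[μ] (0 : X → ℂ) := by
      simpa using Lp.coeFn_zero ℂ 2 μ
    refine ((h f).trans ?_).trans h0.symm
    filter_upwards [hg] with x hx
    simp [hx]
/-- For a bounded weighted composition operator W on L²(μ) with W*^n W^n = M_{J_n}
(J_0 = 1), W is quasi-m-isometric iff G_m = Σ (-1)^{m-k} C(m,k) J_{k+1} = 0 a.e.,
and m-isometric iff G_m^0 = Σ (-1)^{m-k} C(m,k) J_k = 0 a.e. -/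
theorem stmt_11 {X : Type*} [MeasurableSpace X] (μ : Measure X) [SigmaFinite μ]
    (W : Lp ℂ 2 μ →L[ℂ] Lp ℂ 2 μ) (J : ℕ → X → ℝ)
    (hJnn : ∀ n x, 0 ≤ J n x) (hJ0 : ∀ x, J 0 x = 1)
    (hW : ∀ (n : ℕ) (f : Lp ℂ 2 μ),
      ⇑(((adjoint W) ^ n * W ^ n) f) =ᵐ[μ] fun x => (J n x : ℂ) * f x)
    (m : ℕ) (hm : 1 ≤ m) :
    ((∑ k ∈ range (m + 1),
        ((-1 : ℂ) ^ (m - k) * (m.choose k : ℂ)) •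
          ((adjoint W) ^ (k + 1) * W ^ (k + 1)) = 0)
      ↔ (∀ᵐ x ∂μ,
          ∑ k ∈ range (m + 1), (-1 : ℝ) ^ (m - k) * (m.choose k : ℝ) * J (k + 1) x = 0)) ∧
    ((∑ k ∈ range (m + 1),
        ((-1 : ℂ) ^ (m - k) * (m.choose k : ℂ)) • ((adjoint W) ^ k * W ^ k) = 0)
      ↔ (∀ᵐ x ∂μ,
          ∑ k ∈ range (m + 1), (-1 : ℝ) ^ (m - k) * (m.choose k : ℝ) * J k x = 0)) := by
  have key : ∀ σ : ℕ → ℕ,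
      ((∑ k ∈ range (m + 1),
          ((-1 : ℂ) ^ (m - k) * (m.choose k : ℂ)) •
            ((adjoint W) ^ (σ k) * W ^ (σ k)) = 0)
        ↔ (∀ᵐ x ∂μ,
            ∑ k ∈ range (m + 1),
              (-1 : ℝ) ^ (m - k) * (m.choose k : ℝ) * J (σ k) x = 0)) := by
    intro σ
    have hcoe : ∀ f : Lp ℂ 2 μ,
        ⇑((∑ k ∈ range (m + 1),
            ((-1 : ℂ) ^ (m - k) * (m.choose k : ℂ)) •
              ((adjoint W) ^ (σ k) * W ^ (σ k))) f)
          =ᵐ[μ] fun x =>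
            (∑ k ∈ range (m + 1),
              (-1 : ℂ) ^ (m - k) * (m.choose k : ℂ) * (J (σ k) x : ℂ)) * f x := by
      intro f
      rw [ContinuousLinearMap.sum_apply]
      have h1 := coeFn_finset_sum (range (m + 1))
        (fun k => (((-1 : ℂ) ^ (m - k) * (m.choose k : ℂ)) •
          ((adjoint W) ^ (σ k) * W ^ (σ k))) f)
      have h2 : ∀ k ∈ range (m + 1),
          ⇑((((-1 : ℂ) ^ (m - k) * (m.choose k : ℂ)) •
            ((adjoint W) ^ (σ k) * W ^ (σ k))) f)
          =ᵐ[μ] fun x =>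
            (-1 : ℂ) ^ (m - k) * (m.choose k : ℂ) * ((J (σ k) x : ℂ) * f x) := by
        intro k _
        rw [ContinuousLinearMap.smul_apply]
        filter_upwards [Lp.coeFn_smul ((-1 : ℂ) ^ (m - k) * (m.choose k : ℂ))
          (((adjoint W) ^ (σ k) * W ^ (σ k)) f), hW (σ k) f] with x ha hb
        simp only [ha, Pi.smul_apply, hb, smul_eq_mul, mul_assoc]
      have h2' := (Filter.eventually_all_finset (range (m + 1))).2 h2
      filter_upwards [h1, h2'] with x ha hb
      rw [ha, Finset.sum_mul]
      exact Finset.sum_congr rfl fun k hk => by rw [hb k hk]; ring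
    rw [op_zero_iff _ _ hcoe]
    constructor <;> intro h <;> filter_upwards [h] with x hx
    · have : ((∑ k ∈ range (m + 1),
          (-1 : ℝ) ^ (m - k) * (m.choose k : ℝ) * J (σ k) x : ℝ) : ℂ) = 0 := by
        push_cast
        exact hx
      exact_mod_cast this
    · push_cast
      exact_mod_cast congrArg (fun r : ℝ => (r : ℂ)) hx
  exact ⟨key (fun k => k + 1), key id⟩
end

section
/- Let C_φ be a bounded normal composition operator on L²(μ) with C_φ*C_φ = M_h. Then C_φ is m-isometric if and only if (h-1)^m = 0 μ-a.e., if and only if h = 1 μ-a.e., if and only if C_φ is an isometry. -/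
open ContinuousLinearMap Finset MeasureTheory

section Aux

variable {X : Type*} [MeasurableSpace X] {μ : Measure X}

/-- coercion of a finite sum in Lp is a.e. the sum of coercions -/
lemma lp_coeFn_sum {ι : Type*} (s : Finset ι) (g : ι → Lp ℂ 2 μ) :
    ⇑(∑ i ∈ s, g i) =ᵐ[μ] fun x => ∑ i ∈ s, (g i : X → ℂ) x := by
  classical
  induction s using Finset.induction with
  | empty => simp only [Finset.sum_empty]; exact Lp.coeFn_zero ℂ 2 μ
  | insert a s hi ih =>
    rw [Finset.sum_insert hi]
    filter_upwards [Lp.coeFn_add (g a) (∑ i ∈ s, g i), ih] with x hx hx2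
    simp only [hx, Pi.add_apply, hx2, Finset.sum_insert hi]

/-- If g * f = 0 a.e. for every f in L², then g = 0 a.e. (σ-finite case). -/
lemma mul_ae_zero_of_forall {g : X → ℂ} [SigmaFinite μ]
    (H : ∀ f : Lp ℂ 2 μ, (fun x => g x * f x) =ᵐ[μ] 0) : g =ᵐ[μ] 0 := by
  have key : ∀ n : ℕ, ∀ᵐ x ∂μ, x ∈ spanningSets μ n → g x = 0 := by
    intro n
    set f : Lp ℂ 2 μ := indicatorConstLp 2 (measurableSet_spanningSets μ n)
      (measure_spanningSets_lt_top μ n).ne (1 : ℂ) with hf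
    filter_upwards [H f, indicatorConstLp_coeFn (p := 2) (μ := μ)
      (hs := measurableSet_spanningSets μ n) (hμs := (measure_spanningSets_lt_top μ n).ne)
      (c := (1 : ℂ))] with x hx hx2 hmem
    rw [hx2, Set.indicator_of_mem hmem] at hx
    simpa using hx
  have := (MeasureTheory.ae_all_iff).2 key
  filter_upwards [this] with x hx
  obtain ⟨n, hn⟩ : ∃ n, x ∈ spanningSets μ n := by
    have := iUnion_spanningSets μ
    have : x ∈ ⋃ n, spanningSets μ n := by rw [this]; trivial
    exact Set.mem_iUnion.1 this
  exact hx n hn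

end Aux

set_option maxHeartbeats 1000000 in
/-- For a bounded normal composition operator C_φ on L²(μ) with C_φ*C_φ = M_h:
C_φ is m-isometric iff (h-1)^m = 0 a.e. iff h = 1 a.e. iff C_φ is an isometry. -/
theorem stmt_13 {X : Type*} [MeasurableSpace X] (μ : Measure X) [SigmaFinite μ]
    (h : X → ℝ) (C : Lp ℂ 2 μ →L[ℂ] Lp ℂ 2 μ)
    (hnormal : adjoint C * C = C * adjoint C)
    (hC : ∀ f : Lp ℂ 2 μ, ⇑((adjoint C * C) f) =ᵐ[μ] fun x => (h x : ℂ) * f x)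
    (m : ℕ) (hm : 1 ≤ m) :
    ((∑ k ∈ range (m + 1),
        ((-1 : ℂ) ^ (m - k) * (m.choose k : ℂ)) • ((adjoint C) ^ k * C ^ k) = 0)
      ↔ (∀ᵐ x ∂μ, (h x - 1) ^ m = 0)) ∧
    ((∀ᵐ x ∂μ, (h x - 1) ^ m = 0) ↔ (∀ᵐ x ∂μ, h x = 1)) ∧
    ((∀ᵐ x ∂μ, h x = 1) ↔ (∀ f : Lp ℂ 2 μ, ‖C f‖ = ‖f‖)) := by
  classical
  have hcomm : Commute (adjoint C) C := hnormal
  -- (adjoint C)^k * C^k = (adjoint C * C)^k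
  have hpow : ∀ k : ℕ, (adjoint C) ^ k * C ^ k = (adjoint C * C) ^ k := fun k =>
    (hcomm.mul_pow k).symm
  -- powers of T act as multiplication by h^k
  have key : ∀ (k : ℕ) (f : Lp ℂ 2 μ),
      ⇑(((adjoint C * C) ^ k) f) =ᵐ[μ] fun x => (h x : ℂ) ^ k * f x := by
    intro k
    induction k with
    | zero =>
      intro f
      simp only [pow_zero, one_apply, one_mul]
      exact Filter.EventuallyEq.refl _ _
    | succ k ih =>
      intro f
      have h1 := hC (((adjoint C * C) ^ k) f)
      have h2 := ih f
      have : ((adjoint C * C) ^ (k + 1)) f = (adjoint C * C) (((adjoint C * C) ^ k) f) := by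
        rw [pow_succ']; rfl
      rw [this]
      filter_upwards [h1, h2] with x hx hx2
      rw [hx, hx2]
      ring
  -- the m-isometry sum acts as multiplication by (h-1)^m
  have keysum : ∀ f : Lp ℂ 2 μ,
      ⇑((∑ k ∈ range (m + 1),
        ((-1 : ℂ) ^ (m - k) * (m.choose k : ℂ)) • ((adjoint C) ^ k * C ^ k)) f)
        =ᵐ[μ] fun x => ((h x : ℂ) - 1) ^ m * f x := by
    intro f
    rw [ContinuousLinearMap.sum_apply]
    have hsum := lp_coeFn_sum (μ := μ) (range (m + 1))
      (fun k => (((-1 : ℂ) ^ (m - k) * (m.choose k : ℂ)) • ((adjoint C) ^ k * C ^ k)) f)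
    have hterm : ∀ k : ℕ,
        ⇑((((-1 : ℂ) ^ (m - k) * (m.choose k : ℂ)) • ((adjoint C) ^ k * C ^ k)) f)
          =ᵐ[μ] fun x => ((-1 : ℂ) ^ (m - k) * (m.choose k : ℂ)) * ((h x : ℂ) ^ k * f x) := by
      intro k
      rw [ContinuousLinearMap.smul_apply]
      filter_upwards [Lp.coeFn_smul ((-1 : ℂ) ^ (m - k) * (m.choose k : ℂ))
        ((((adjoint C) ^ k * C ^ k)) f), (hpow k ▸ key k f : _)] with x hx hx2
      rw [hx, Pi.smul_apply, hx2, smul_eq_mul]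
    have hall := (MeasureTheory.ae_all_iff).2 hterm
    filter_upwards [hsum, hall] with x hx hxall
    rw [hx]
    have : ∑ k ∈ range (m + 1),
        ((((-1 : ℂ) ^ (m - k) * (m.choose k : ℂ)) • ((adjoint C) ^ k * C ^ k)) f : X → ℂ) x
        = ∑ k ∈ range (m + 1),
          ((-1 : ℂ) ^ (m - k) * (m.choose k : ℂ)) * ((h x : ℂ) ^ k * f x) :=
      Finset.sum_congr rfl fun k _ => hxall k
    rw [this]
    have hbin : ((h x : ℂ) - 1) ^ m
        = ∑ k ∈ range (m + 1), ((-1 : ℂ) ^ (m - k) * (m.choose k : ℂ)) * (h x : ℂ) ^ k := by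
      rw [sub_pow]
      refine Finset.sum_congr rfl fun k hk => ?_
      rw [Finset.mem_range] at hk
      have : ((-1 : ℂ)) ^ (k + m) = (-1) ^ (m - k) := by
        conv_lhs => rw [show k + m = (m - k) + 2 * k by omega]
        rw [pow_add, pow_mul]
        simp
      rw [this, one_pow]
      ring
    rw [hbin, Finset.sum_mul]
    refine Finset.sum_congr rfl fun k hk => by ring
  have hTone : (∀ᵐ x ∂μ, h x = 1) → ∀ f : Lp ℂ 2 μ, (adjoint C * C) f = f := by
    intro hone f
    refine Lp.ext ?_
    filter_upwards [hC f, hone] with x hx hx2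
    rw [hx, hx2]
    simp
  refine ⟨?_, ?_, ?_⟩
  · -- sum = 0 ↔ (h-1)^m = 0 a.e.
    constructor
    · intro hz
      have H : ∀ f : Lp ℂ 2 μ, (fun x => ((h x : ℂ) - 1) ^ m * f x) =ᵐ[μ] 0 := by
        intro f
        have hk := keysum f
        rw [hz] at hk
        simp only [ContinuousLinearMap.zero_apply] at hk
        filter_upwards [hk.symm, Lp.coeFn_zero ℂ 2 μ] with x hx hx2
        rw [hx]
        exact hx2
      have := mul_ae_zero_of_forall (μ := μ) (g := fun x => ((h x : ℂ) - 1) ^ m) H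
      filter_upwards [this] with x hx
      have : (((h x - 1 : ℝ) : ℂ)) ^ m = 0 := by push_cast; exact hx
      exact_mod_cast this
    · intro hae
      ext f
      simp only [ContinuousLinearMap.zero_apply]
      filter_upwards [keysum f, Lp.coeFn_zero ℂ 2 μ, hae] with x hx hx0 hx2
      rw [hx, hx0]
      have : ((h x : ℂ) - 1) ^ m = 0 := by
        have : (((h x - 1 : ℝ) : ℂ)) ^ m = 0 := by exact_mod_cast hx2
        push_cast at this
        exact this
      rw [this, zero_mul]
      rfl
  · -- (h-1)^m = 0 a.e. ↔ h = 1 a.e.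
    constructor
    · intro hae
      filter_upwards [hae] with x hx
      have := pow_eq_zero_iff (n := m) (by omega) |>.1 hx
      linarith
    · intro hae
      filter_upwards [hae] with x hx
      rw [hx]
      simp [zero_pow (by omega : m ≠ 0)]
  · -- h = 1 a.e. ↔ isometry
    constructor
    · intro hone f
      have hTf : (adjoint C * C) f = f := hTone hone f
      have hinner : (inner ℂ (C f) (C f) : ℂ) = inner ℂ f f := by
        calc (inner ℂ (C f) (C f) : ℂ) = inner ℂ ((adjoint C) (C f)) f :=
              (ContinuousLinearMap.adjoint_inner_left C f (C f)).symm
          _ = inner ℂ ((adjoint C * C) f) f := rfl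
          _ = inner ℂ f f := by rw [hTf]
      have h1 : (‖C f‖ : ℝ) ^ 2 = ‖f‖ ^ 2 := by
        have e1 := inner_self_eq_norm_sq_to_K (𝕜 := ℂ) (C f)
        have e2 := inner_self_eq_norm_sq_to_K (𝕜 := ℂ) f
        rw [e1, e2] at hinner
        exact_mod_cast hinner
      exact (sq_eq_sq₀ (norm_nonneg _) (norm_nonneg _)).mp h1
    · intro hiso
      have hT : ∀ f : Lp ℂ 2 μ, (adjoint C * C) f = f := by
        set D : Lp ℂ 2 μ →ₗ[ℂ] Lp ℂ 2 μ :=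
          ((adjoint C * C : Lp ℂ 2 μ →L[ℂ] Lp ℂ 2 μ) : Lp ℂ 2 μ →ₗ[ℂ] Lp ℂ 2 μ) - LinearMap.id
          with hD
        have hDzero : D = 0 := by
          rw [← inner_map_self_eq_zero]
          intro f
          have h1 : (inner ℂ ((adjoint C * C) f) f : ℂ) = inner ℂ (C f) (C f) :=
            ContinuousLinearMap.adjoint_inner_left C f (C f)
          have h2 : (inner ℂ (C f) (C f) : ℂ) = inner ℂ f f := by
            rw [inner_self_eq_norm_sq_to_K, inner_self_eq_norm_sq_to_K, hiso f]
          have : D f = (adjoint C * C) f - f := rfl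
          rw [this, inner_sub_left, h1, h2, sub_self]
        intro f
        have := LinearMap.congr_fun hDzero f
        simpa [hD, sub_eq_zero] using this
      have H : ∀ f : Lp ℂ 2 μ, (fun x => ((h x : ℂ) - 1) * f x) =ᵐ[μ] 0 := by
        intro f
        have h1 := hC f
        rw [hT f] at h1
        filter_upwards [h1] with x hx
        simp only [Pi.zero_apply]
        rw [sub_mul, one_mul, ← hx]
        ring
      have := mul_ae_zero_of_forall (μ := μ) (g := fun x => (h x : ℂ) - 1) H
      filter_upwards [this] with x hx
      simp only [Pi.zero_apply] at hx
      have : ((h x : ℂ)) = 1 := by linear_combination hx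
      exact_mod_cast this
end

section
/- Let T be a bounded normal operator on a Hilbert space that is quasi-m-isometric for some m ∈ ℕ. Then σ(T*T) ⊆ {0, 1}, and hence |λ| ∈ {0,1} for every λ ∈ σ(T). -/
open ContinuousLinearMap Finset

/-- For a bounded normal quasi-m-isometric operator T, σ(T*T) ⊆ {0,1}, and hence
|λ| ∈ {0,1} for every λ ∈ σ(T). -/
theorem stmt_16 {H : Type*} [NormedAddCommGroup H] [InnerProductSpace ℂ H] [CompleteSpace H]
    (T : H →L[ℂ] H) (hnormal : adjoint T * T = T * adjoint T) (m : ℕ) (hm : 1 ≤ m)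
    (hqm : ∑ k ∈ range (m + 1),
      ((-1 : ℂ) ^ (m - k) * (m.choose k : ℂ)) • ((adjoint T) ^ (k + 1) * T ^ (k + 1)) = 0) :
    spectrum ℂ (adjoint T * T) ⊆ {0, 1} ∧
      ∀ lam ∈ spectrum ℂ T, ‖lam‖ = 0 ∨ ‖lam‖ = 1 := by
  have hstar : star T = adjoint T := (ContinuousLinearMap.star_eq_adjoint T)
  have hN : IsStarNormal T := ⟨by rw [Commute, SemiconjBy, hstar, hnormal]⟩
  set A := adjoint T * T with hA
  -- step 1: A * (A - 1)^m = 0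
  have hcomm : Commute (adjoint T) T := hnormal
  have hpow : ∀ n : ℕ, (adjoint T) ^ n * T ^ n = A ^ n := fun n => (hcomm.mul_pow n).symm
  have key : A * (A - 1) ^ m = 0 := by
    have hsub : (A - 1 : H →L[ℂ] H) ^ m = ∑ k ∈ range (m + 1),
        A ^ k * (-1 : H →L[ℂ] H) ^ (m - k) * (m.choose k : H →L[ℂ] H) := by
      have := (Commute.neg_one_right A).add_pow m
      simpa [sub_eq_add_neg] using this
    calc A * (A - 1) ^ m
        = ∑ k ∈ range (m + 1), ((-1 : ℂ) ^ (m - k) * (m.choose k : ℂ)) • A ^ (k + 1) := by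
          rw [hsub, Finset.mul_sum]
          refine Finset.sum_congr rfl fun k _ => ?_
          rw [show ((-1 : H →L[ℂ] H) ^ (m - k)) = ((-1:ℂ)^(m-k)) • (1:H →L[ℂ] H) from by
                rw [show (-1 : H →L[ℂ] H) = ((-1:ℂ)) • 1 from by simp, _root_.smul_pow]
                simp,
              show ((m.choose k : H →L[ℂ] H)) = ((m.choose k : ℂ)) • (1:H →L[ℂ] H) from by
                simp [Nat.cast_smul_eq_nsmul, nsmul_eq_mul]]
          simp only [smul_mul_assoc, mul_smul_comm, mul_one, one_mul, smul_smul]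
          rw [← pow_succ', mul_comm ((m.choose k : ℂ)) _]
      _ = 0 := by
          rw [← hqm]
          exact Finset.sum_congr rfl fun k _ => by rw [hpow]
  -- Part 1: spectrum of A
  have part1 : spectrum ℂ A ⊆ {0, 1} := by
    intro μ hμ
    have h0 : Polynomial.aeval A (Polynomial.X * (Polynomial.X - 1) ^ m : Polynomial ℂ) = 0 := by
      simp only [map_mul, map_pow, map_sub, map_one, Polynomial.aeval_X]
      exact key
    have hmem := spectrum.subset_polynomial_aeval A
      (Polynomial.X * (Polynomial.X - 1) ^ m : Polynomial ℂ) ⟨μ, hμ, rfl⟩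
    rw [h0] at hmem
    have heval : μ * (μ - 1) ^ m = 0 := by
      by_contra hne
      have : IsUnit (algebraMap ℂ (H →L[ℂ] H) (Polynomial.eval μ
          (Polynomial.X * (Polynomial.X - 1) ^ m : Polynomial ℂ)) - 0) := by
        rw [sub_zero]
        refine IsUnit.map _ (Ne.isUnit ?_)
        simpa using hne
      exact (spectrum.mem_iff.mp hmem) this
    rcases mul_eq_zero.mp heval with h | h
    · exact Or.inl h
    · right
      have := pow_eq_zero_iff (n := m) (by omega) |>.mp h
      have : μ = 1 := by linear_combination this
      exact this
  -- Part 2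
  refine ⟨part1, fun lam hlam => ?_⟩
  have hcfc : cfc (fun z : ℂ => star z * z) T = A := by
    rw [cfc_mul (fun z : ℂ => star z) (fun z : ℂ => z) T (by fun_prop) (by fun_prop),
      cfc_star (fun z : ℂ => z) T, cfc_id' ℂ T hN, hA, hstar]
  have hmem : star lam * lam ∈ spectrum ℂ A := by
    rw [← hcfc, cfc_map_spectrum (f := fun z : ℂ => star z * z) (a := T) hN (by fun_prop)]
    exact ⟨lam, hlam, rfl⟩
  have h2 := part1 hmem
  have habs : star lam * lam = ((‖lam‖ ^ 2 : ℝ) : ℂ) := by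
    rw [Complex.star_def, ← Complex.normSq_eq_conj_mul_self, Complex.sq_norm]
  rcases h2 with h | h
  · left
    have h0 : ((‖lam‖ ^ 2 : ℝ) : ℂ) = 0 := by rw [← habs]; exact h
    have : ‖lam‖ ^ 2 = 0 := by exact_mod_cast h0
    nlinarith [norm_nonneg lam]
  · right
    have h0 : ((‖lam‖ ^ 2 : ℝ) : ℂ) = 1 := by rw [← habs]; exact h
    have : ‖lam‖ ^ 2 = 1 := by exact_mod_cast h0
    nlinarith [norm_nonneg lam]
end
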